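/- Let A be a closed subset of a topological space X and p a prime. If A is a ℚ_p-homological Z_{n+1}-set in X (where ℚ_p = ℚ/R_p is the quasicyclic Prüfer p-group), then A is a ℤ_p-homological Z_n-set in X. -/

import Mathlib

open CategoryTheory CategoryTheory.Limits AlgebraicTopology

/-- The functor sending a type `S` to the free `G`-coefficient group `S →₀ G`. -/
noncomputable def coeffFunctor (G : Type) [AddCommGroup G] : Type ⥤ AddCommGrpCat where
  obj S := AddCommGrpCat.of (S →₀ G)
  map f := AddCommGrpCat.ofHom (Finsupp.mapDomain.addMonoidHom f)
  map_id S := by ext x; simp [Finsupp.mapDomain_single]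
  map_comp f g := by ext x; simp [Finsupp.mapDomain_single]

/-- The singular chain complex of `X` with coefficients in `G`. -/
noncomputable def singularChains (G : Type) [AddCommGroup G] (X : Type) [TopologicalSpace X] :
    ChainComplex AddCommGrpCat ℕ :=
  (alternatingFaceMapComplex AddCommGrpCat).obj
    (TopCat.toSSet.obj (TopCat.of X) ⋙ coeffFunctor G)

/-- The chain map induced by a continuous map. -/
noncomputable def singularChainsMap (G : Type) [AddCommGroup G] {X Y : Type}
    [TopologicalSpace X] [TopologicalSpace Y] (f : C(X, Y)) :
    singularChains G X ⟶ singularChains G Y :=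
  (alternatingFaceMapComplex AddCommGrpCat).map
    (Functor.whiskerRight (TopCat.toSSet.map (TopCat.ofHom f : TopCat.of X ⟶ TopCat.of Y)) (coeffFunctor G))

lemma singularChainsMap_comp (G : Type) [AddCommGroup G] {X Y Z : Type}
    [TopologicalSpace X] [TopologicalSpace Y] [TopologicalSpace Z] (f : C(X, Y)) (g : C(Y, Z)) :
    singularChainsMap G (g.comp f) = singularChainsMap G f ≫ singularChainsMap G g := by
  have e : TopCat.ofHom (g.comp f) = TopCat.ofHom f ≫ TopCat.ofHom g := rfl
  simp only [singularChainsMap, e, Functor.map_comp, Functor.whiskerRight_comp]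
  rfl

/-- Relative singular homology `H_k(U, U \ A; G)` of the pair of subspaces `(U, U \ A)` of `X`,
defined as the homology of the cokernel of the chain map induced by the inclusion
`U \ A ⊆ U`. -/
noncomputable def relHomology (G : Type) [AddCommGroup G] {X : Type} [TopologicalSpace X]
    (U A : Set X) (k : ℕ) : AddCommGrpCat :=
  (cokernel (singularChainsMap G
    (⟨Set.inclusion (Set.diff_subset : U \ A ⊆ U), continuous_inclusion _⟩ :
      C(↥(U \ A), ↥U)))).homology k

/-- `A` is a `G`-homological `Z_n`-set in `X` : it is closed and `H_k(U, U \ A; G) = 0`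
for all open `U ⊆ X` and all `k ≤ n`. -/
def IsHomologicalZSet (G : Type) [AddCommGroup G] {X : Type} [TopologicalSpace X]
    (n : ℕ) (A : Set X) : Prop :=
  IsClosed A ∧ ∀ U : Set X, IsOpen U → ∀ k : ℕ, k ≤ n → Subsingleton (relHomology G U A k)

/-- The subgroup `R_p ⊆ ℚ` of rationals whose denominator is not divisible by `p`
(i.e. rationals `a/b` with `b` coprime to `p`). -/
def RpGroup (p : ℕ) : AddSubgroup ℚ where
  carrier := {q | ∃ a b : ℤ, IsCoprime b (p : ℤ) ∧ (b : ℚ) * q = (a : ℚ)}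
  zero_mem' := ⟨0, 1, isCoprime_one_left, by simp⟩
  add_mem' := by
    rintro x y ⟨a₁, b₁, h₁, e₁⟩ ⟨a₂, b₂, h₂, e₂⟩
    refine ⟨a₁ * b₂ + a₂ * b₁, b₁ * b₂, h₁.mul_left h₂, ?_⟩
    push_cast
    linear_combination (b₂ : ℚ) * e₁ + (b₁ : ℚ) * e₂
  neg_mem' := by
    rintro x ⟨a, b, h, e⟩
    exact ⟨-a, b, h, by push_cast; linear_combination -e⟩


namespace Stmt14Aux

open Opposite

/-! ### Coefficient short exact sequence `0 → ZMod p → ℚ/R_p → ℚ/R_p → 0` -/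

noncomputable def iotaHom (p : ℕ) : ZMod p →+ ℚ ⧸ RpGroup p :=
  ZMod.lift p ⟨(QuotientAddGroup.mk' (RpGroup p)).comp
    (AddMonoidHom.mk' (fun z : ℤ => ((z : ℚ) / p)) (fun a b => by push_cast; ring)), by
      rcases eq_or_ne p 0 with h0 | h0
      · simp [h0]
      · have hp : ((p : ℤ) : ℚ) / p = 1 := div_self (by exact_mod_cast h0)
        simp only [AddMonoidHom.comp_apply, AddMonoidHom.mk'_apply, hp]
        rw [QuotientAddGroup.mk'_apply, QuotientAddGroup.eq_zero_iff]
        exact ⟨1, 1, isCoprime_one_left, by norm_num⟩⟩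

lemma iota_intCast (p : ℕ) (z : ℤ) :
    iotaHom p ((z : ZMod p)) = (((z : ℚ) / p : ℚ) : ℚ ⧸ RpGroup p) :=
  ZMod.lift_coe p _ z

noncomputable def mulP (p : ℕ) : (ℚ ⧸ RpGroup p) →+ (ℚ ⧸ RpGroup p) :=
  zsmulAddGroupHom (p : ℤ)

lemma mulP_mk (p : ℕ) (q : ℚ) :
    mulP p ((q : ℚ ⧸ RpGroup p)) = (((p : ℚ) * q : ℚ) : ℚ ⧸ RpGroup p) := by
  show (p : ℤ) • ((q : ℚ ⧸ RpGroup p)) = _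
  rw [← QuotientAddGroup.mk'_apply, ← map_zsmul, QuotientAddGroup.mk'_apply]
  congr 1

lemma iota_injective (p : ℕ) (hp : p.Prime) : Function.Injective (iotaHom p) := by
  rw [injective_iff_map_eq_zero]
  intro x hx
  obtain ⟨z, rfl⟩ := ZMod.intCast_surjective x
  rw [iota_intCast, QuotientAddGroup.eq_zero_iff] at hx
  obtain ⟨a, b, hco, he⟩ := hx
  have hpQ : (p : ℚ) ≠ 0 := by exact_mod_cast hp.ne_zero
  have he2 : ((b * z : ℤ) : ℚ) = ((a * (p : ℤ) : ℤ) : ℚ) := by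
    push_cast
    field_simp at he
    linarith
  have he3 : (b * z : ℤ) = a * (p : ℤ) := by exact_mod_cast he2
  have hdvd : (p : ℤ) ∣ b * z := ⟨a, by linarith⟩
  have hdvd2 : (p : ℤ) ∣ z := (hco.symm).dvd_of_dvd_mul_left hdvd
  exact (ZMod.intCast_zmod_eq_zero_iff_dvd z p).2 (by exact_mod_cast hdvd2)

lemma mulP_surjective (p : ℕ) (hp : p ≠ 0) : Function.Surjective (mulP p) := by
  have hpQ : (p : ℚ) ≠ 0 := by exact_mod_cast hp
  intro y
  induction y using QuotientAddGroup.induction_on with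
  | H q => exact ⟨((q / p : ℚ) : ℚ ⧸ RpGroup p), by rw [mulP_mk, mul_div_cancel₀ q hpQ]⟩

lemma mulP_iota (p : ℕ) (hp : p.Prime) (x : ZMod p) : mulP p (iotaHom p x) = 0 := by
  have hpQ : (p : ℚ) ≠ 0 := by exact_mod_cast hp.ne_zero
  obtain ⟨z, rfl⟩ := ZMod.intCast_surjective x
  rw [iota_intCast, mulP_mk, QuotientAddGroup.eq_zero_iff]
  refine ⟨z, 1, isCoprime_one_left, ?_⟩
  rw [mul_div_assoc', mul_div_cancel_left₀ _ hpQ]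
  norm_num

lemma exact_mulP_iota (p : ℕ) (hp : p.Prime) :
    ∀ y, mulP p y = 0 → ∃ x, iotaHom p x = y := by
  have hpQ : (p : ℚ) ≠ 0 := by exact_mod_cast hp.ne_zero
  intro y hy
  induction y using QuotientAddGroup.induction_on with
  | H q =>
    rw [mulP_mk, QuotientAddGroup.eq_zero_iff] at hy
    obtain ⟨a, b, hco, he⟩ := hy
    obtain ⟨u, v, huv⟩ := hco
    refine ⟨((u * a : ℤ) : ZMod p), ?_⟩
    rw [iota_intCast]
    rw [QuotientAddGroup.eq_iff_sub_mem]
    refine ⟨-(v * a), b, ⟨u, v, huv⟩, ?_⟩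
    have huv' : ((u : ℚ) * b + v * p = 1) := by exact_mod_cast congrArg (Int.cast : ℤ → ℚ) huv
    have h1 : (b : ℚ) * q = (a : ℚ) / p := by
      rw [eq_div_iff hpQ]
      linear_combination he
    push_cast
    rw [mul_sub, h1, mul_div_assoc', div_sub_div_same, div_eq_iff hpQ]
    linear_combination (a : ℚ) * huv'

lemma comp_zero' (p : ℕ) (hp : p.Prime) (x : ZMod p) :
    (mulP p).comp (iotaHom p) x = 0 := mulP_iota p hp x

/-! ### Finsupp mapRange exactness lemmas -/

section FinsuppLemmas

variable {S : Type} {G₁ G₂ G₃ : Type} [AddCommGroup G₁] [AddCommGroup G₂] [AddCommGroup G₃]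

lemma mr_apply (φ : G₁ →+ G₂) (v : S →₀ G₁) :
    Finsupp.mapRange.addMonoidHom φ v = Finsupp.mapRange φ φ.map_zero v := rfl

lemma mapRange_surj (φ : G₁ →+ G₂) (hφ : Function.Surjective φ) :
    Function.Surjective (Finsupp.mapRange.addMonoidHom (ι := S) φ) := by
  intro v
  classical
  refine ⟨Finsupp.onFinset v.support
    (fun s => if h : v s = 0 then 0 else Classical.choose (hφ (v s))) ?_, ?_⟩
  · intro s hs
    rw [Finsupp.mem_support_iff]
    intro hvs
    simp [hvs] at hs
  · ext s
    rw [mr_apply, Finsupp.mapRange_apply, Finsupp.onFinset_apply]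
    by_cases h : v s = 0
    · simp [h]
    · simp only [h, dif_neg, not_false_iff]
      exact Classical.choose_spec (hφ (v s))

lemma mapRange_exact (φ : G₁ →+ G₂) (ψ : G₂ →+ G₃)
    (hex : ∀ y, ψ y = 0 → ∃ x, φ x = y) (v : S →₀ G₂)
    (hv : Finsupp.mapRange.addMonoidHom (ι := S) ψ v = 0) :
    ∃ u, Finsupp.mapRange.addMonoidHom (ι := S) φ u = v := by
  classical
  have hv' : ∀ s, ψ (v s) = 0 := by
    intro s
    have := DFunLike.congr_fun hv s
    rwa [mr_apply, Finsupp.mapRange_apply, Finsupp.coe_zero, Pi.zero_apply] at this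
  refine ⟨Finsupp.onFinset v.support
    (fun s => if h : v s = 0 then 0 else Classical.choose (hex (v s) (hv' s))) ?_, ?_⟩
  · intro s hs
    rw [Finsupp.mem_support_iff]
    intro hvs
    simp [hvs] at hs
  · ext s
    rw [mr_apply, Finsupp.mapRange_apply, Finsupp.onFinset_apply]
    by_cases h : v s = 0
    · simp [h]
    · simp only [h, dif_neg, not_false_iff]
      exact Classical.choose_spec (hex (v s) (hv' s))

lemma mapRange_inj (φ : G₁ →+ G₂) (hφ : Function.Injective φ) :
    Function.Injective (Finsupp.mapRange.addMonoidHom (ι := S) φ) :=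
  Finsupp.mapRange_injective φ φ.map_zero hφ

lemma mapRange_comp_zero (φ : G₁ →+ G₂) (ψ : G₂ →+ G₃)
    (h : ∀ x, ψ (φ x) = 0) (v : S →₀ G₁) :
    Finsupp.mapRange.addMonoidHom (ι := S) ψ (Finsupp.mapRange.addMonoidHom (ι := S) φ v) = 0 := by
  ext s
  rw [mr_apply, mr_apply, Finsupp.mapRange_apply, Finsupp.mapRange_apply]
  simp [h]

end FinsuppLemmas

/-! ### The diagram chase for cokernels -/

lemma cokerChase
    {A₁ A₂ A₃ B₁ B₂ B₃ Q₁ Q₂ Q₃ : Type}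
    [AddCommGroup A₁] [AddCommGroup A₂] [AddCommGroup A₃]
    [AddCommGroup B₁] [AddCommGroup B₂] [AddCommGroup B₃]
    [AddCommGroup Q₁] [AddCommGroup Q₂] [AddCommGroup Q₃]
    (f₁ : A₁ →+ B₁) (f₂ : A₂ →+ B₂) (f₃ : A₃ →+ B₃)
    (a : A₁ →+ A₂) (a' : A₂ →+ A₃) (b : B₁ →+ B₂) (b' : B₂ →+ B₃)
    (π₁ : B₁ →+ Q₁) (π₂ : B₂ →+ Q₂) (π₃ : B₃ →+ Q₃)
    (q : Q₁ →+ Q₂) (q' : Q₂ →+ Q₃)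
    (hπ₁ : Function.Surjective π₁) (hπ₂ : Function.Surjective π₂)
    (hπ₃ : Function.Surjective π₃)
    (hker₁ : ∀ x, π₁ x = 0 → ∃ u, f₁ u = x)
    (hker₂ : ∀ x, π₂ x = 0 → ∃ u, f₂ u = x)
    (hker₃ : ∀ x, π₃ x = 0 → ∃ u, f₃ u = x)
    (hz₁ : ∀ u, π₁ (f₁ u) = 0) (hz₂ : ∀ u, π₂ (f₂ u) = 0) (hz₃ : ∀ u, π₃ (f₃ u) = 0)
    (sq₁ : ∀ x, q (π₁ x) = π₂ (b x)) (sq₂ : ∀ x, q' (π₂ x) = π₃ (b' x))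
    (sqa : ∀ u, b (f₁ u) = f₂ (a u)) (sqb : ∀ u, b' (f₂ u) = f₃ (a' u))
    (hbinj : Function.Injective b) (hf₃inj : Function.Injective f₃)
    (ha'surj : Function.Surjective a') (hb'surj : Function.Surjective b')
    (hbb' : ∀ y, b' (b y) = 0)
    (hexA : ∀ u, a' u = 0 → ∃ t, a t = u)
    (hexB : ∀ x, b' x = 0 → ∃ y, b y = x) :
    Function.Injective q ∧ Function.Surjective q' ∧ (∀ z, q' z = 0 → ∃ w, q w = z) := by
  have hq0 : ∀ x, q x = 0 → x = 0 := by
    intro x hx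
    obtain ⟨b₁, rfl⟩ := hπ₁ x
    rw [sq₁] at hx
    obtain ⟨a₂, ha₂⟩ := hker₂ _ hx
    have h1 : f₃ (a' a₂) = f₃ 0 := by
      rw [map_zero, ← sqb, ha₂, hbb']
    obtain ⟨a₁, rfl⟩ := hexA _ (hf₃inj h1)
    have h2 : b (f₁ a₁) = b b₁ := by rw [sqa, ha₂]
    rw [← hbinj h2, hz₁]
  refine ⟨?_, ?_, ?_⟩
  · intro x y hxy
    have : q (x - y) = 0 := by rw [map_sub, hxy, sub_self]
    have := hq0 _ this
    rwa [sub_eq_zero] at this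
  · intro z
    obtain ⟨b₃, rfl⟩ := hπ₃ z
    obtain ⟨b₂, rfl⟩ := hb'surj b₃
    exact ⟨π₂ b₂, (sq₂ b₂)⟩
  · intro z hz
    obtain ⟨b₂, rfl⟩ := hπ₂ z
    rw [sq₂] at hz
    obtain ⟨a₃, ha₃⟩ := hker₃ _ hz
    obtain ⟨a₂, rfl⟩ := ha'surj a₃
    have h1 : b' (b₂ - f₂ a₂) = 0 := by rw [map_sub, sqb, ha₃, sub_self]
    obtain ⟨b₁, hb₁⟩ := hexB _ h1
    refine ⟨π₁ b₁, ?_⟩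
    rw [sq₁, hb₁, map_sub, hz₂ a₂, sub_zero]

end Stmt14Aux
namespace Stmt14Aux

open Opposite

section Cat

variable {G₁ G₂ G₃ : Type} [AddCommGroup G₁] [AddCommGroup G₂] [AddCommGroup G₃]

lemma mapRange_zero_of (φ : G₁ →+ G₂) (h : ∀ x, φ x = 0) {S : Type} (v : S →₀ G₁) :
    Finsupp.mapRange.addMonoidHom (ι := S) φ v = 0 := by
  ext s
  rw [mr_apply, Finsupp.mapRange_apply]
  simp [h]

noncomputable def coeffNat (φ : G₁ →+ G₂) : coeffFunctor G₁ ⟶ coeffFunctor G₂ where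
  app S := AddCommGrpCat.ofHom (Finsupp.mapRange.addMonoidHom φ)
  naturality {S T} f := by
    ext v
    exact (Finsupp.mapDomain_mapRange f v φ φ.map_zero φ.map_add).symm

noncomputable def chainsNat (φ : G₁ →+ G₂) (Y : Type) [TopologicalSpace Y] :
    singularChains G₁ Y ⟶ singularChains G₂ Y :=
  (AlgebraicTopology.alternatingFaceMapComplex AddCommGrpCat).map
    (CategoryTheory.Functor.whiskerLeft (TopCat.toSSet.obj (TopCat.of Y)) (coeffNat φ))

lemma chainsNat_comm (φ : G₁ →+ G₂) {X Y : Type} [TopologicalSpace X] [TopologicalSpace Y]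
    (f : C(X, Y)) :
    singularChainsMap G₁ f ≫ chainsNat φ Y = chainsNat φ X ≫ singularChainsMap G₂ f := by
  unfold singularChainsMap chainsNat
  erw [← Functor.map_comp, ← Functor.map_comp]
  congr 1
  ext c v
  exact ConcreteCategory.congr_hom ((coeffNat φ).naturality _) v

end Cat

section Eval

variable {K L : ChainComplex AddCommGrpCat ℕ} (w : K ⟶ L) (k : ℕ)

lemma cok_ker {A B : AddCommGrpCat} (f : A ⟶ B) (x : B) (hx : cokernel.π f x = 0) :
    ∃ a, f a = x := by
  have h1 : cokernel.π f ≫ (AddCommGrpCat.cokernelIsoQuotient f).hom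
      = AddCommGrpCat.ofHom (QuotientAddGroup.mk' (AddMonoidHom.range f.hom)) := cokernel.π_desc _ _ _
  have h2 : (cokernel.π f ≫ (AddCommGrpCat.cokernelIsoQuotient f).hom) x = 0 := by
    show (AddCommGrpCat.cokernelIsoQuotient f).hom (cokernel.π f x) = 0
    rw [hx]
    exact AddMonoidHom.map_zero _
  rw [h1] at h2
  have h3 : x ∈ AddMonoidHom.range f.hom := (QuotientAddGroup.eq_zero_iff x).1 h2
  exact h3

lemma pik_surj : Function.Surjective ((cokernel.π w).f k) := by
  set F := HomologicalComplex.eval AddCommGrpCat (ComplexShape.down ℕ) k with hF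
  have h1 : cokernel.π (F.map w) ≫ cokernelComparison w F = F.map (cokernel.π w) :=
    π_comp_cokernelComparison w F
  intro x
  have hcsurj : Function.Surjective (cokernelComparison w F) :=
    (AddCommGrpCat.epi_iff_surjective _).1 inferInstance
  have hπsurj : Function.Surjective (cokernel.π (F.map w)) :=
    (AddCommGrpCat.epi_iff_surjective _).1 inferInstance
  obtain ⟨y, hy⟩ := hcsurj x
  obtain ⟨z, hz⟩ := hπsurj y
  refine ⟨z, ?_⟩
  have h3 : (cokernel.π (F.map w) ≫ cokernelComparison w F) z = x := by
    show cokernelComparison w F (cokernel.π (F.map w) z) = x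
    rw [hz, hy]
  rw [h1] at h3
  exact h3

lemma pik_ker (x : L.X k) (hx : (cokernel.π w).f k x = 0) : ∃ a, w.f k a = x := by
  set F := HomologicalComplex.eval AddCommGrpCat (ComplexShape.down ℕ) k with hF
  have h1 : cokernel.π (F.map w) ≫ cokernelComparison w F = F.map (cokernel.π w) :=
    π_comp_cokernelComparison w F
  have hinj : Function.Injective (cokernelComparison w F) :=
    (AddCommGrpCat.mono_iff_injective _).1 inferInstance
  have h2 : (cokernel.π (F.map w) ≫ cokernelComparison w F) x = 0 := by
    rw [h1]
    exact hx
  have h4 : cokernel.π (F.map w) x = 0 := by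
    apply hinj
    rw [show cokernelComparison w F (cokernel.π (F.map w) x)
      = (cokernel.π (F.map w) ≫ cokernelComparison w F) x from rfl, h2]
    exact (AddMonoidHom.map_zero _).symm
  exact cok_ker (F.map w) x h4

lemma pik_zero (a : K.X k) : (cokernel.π w).f k (w.f k a) = 0 := by
  have h3 : (w ≫ cokernel.π w).f k a = (0 : K ⟶ cokernel w).f k a := by
    rw [cokernel.condition w]
  exact h3

end Eval

end Stmt14Aux
namespace Stmt14Aux

open Opposite

section Rel

variable {G₁ G₂ G₃ : Type} [AddCommGroup G₁] [AddCommGroup G₂] [AddCommGroup G₃]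
variable {X : Type} [TopologicalSpace X]

/-- The inclusion `U \ A ⊆ U` as a continuous map, exactly as in `relHomology`. -/
def inclUA (U A : Set X) : C(↥(U \ A), ↥U) :=
  ⟨Set.inclusion (Set.diff_subset : U \ A ⊆ U),
    continuous_inclusion (Set.diff_subset : U \ A ⊆ U)⟩

/-- The relative chain complex, whose homology is `relHomology`. -/
noncomputable abbrev relCx (G : Type) [AddCommGroup G] (U A : Set X) :
    ChainComplex AddCommGrpCat ℕ :=
  cokernel (singularChainsMap G (inclUA U A))

lemma relHomology_eq (G : Type) [AddCommGroup G] (U A : Set X) (k : ℕ) :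
    relHomology G U A k = (relCx G U A).homology k := rfl

noncomputable def relMap (φ : G₁ →+ G₂) (U A : Set X) :
    relCx G₁ U A ⟶ relCx G₂ U A :=
  cokernel.map _ _ (chainsNat φ ↥(U \ A)) (chainsNat φ ↥U) (chainsNat_comm φ (inclUA U A))

lemma relMap_pi (φ : G₁ →+ G₂) (U A : Set X) :
    cokernel.π (singularChainsMap G₁ (inclUA U A)) ≫ relMap φ U A
      = chainsNat φ ↥U ≫ cokernel.π (singularChainsMap G₂ (inclUA U A)) := by
  simp [relMap, cokernel.map]

lemma relMap_pi_apply (φ : G₁ →+ G₂) (U A : Set X) (j : ℕ)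
    (x : ((singularChains G₁ ↥U).X j)) :
    (relMap φ U A).f j ((cokernel.π (singularChainsMap G₁ (inclUA U A))).f j x)
      = (cokernel.π (singularChainsMap G₂ (inclUA U A))).f j ((chainsNat φ ↥U).f j x) := by
  have h1 : ((cokernel.π (singularChainsMap G₁ (inclUA U A)) ≫ relMap φ U A).f j) x
      = ((chainsNat φ ↥U ≫ cokernel.π (singularChainsMap G₂ (inclUA U A))).f j) x := by
    rw [relMap_pi]
  exact h1


end Rel

section SES

variable {X : Type} [TopologicalSpace X]

def toTopHom {X' Y' : Type} [TopologicalSpace X'] [TopologicalSpace Y'] (f : C(X', Y')) :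
    TopCat.of X' ⟶ TopCat.of Y' := TopCat.ofHom f

def asHom {X' : Type} [TopologicalSpace X'] {j : ℕ}
    (σ : (TopCat.toSSet.obj (TopCat.of X')).obj (op (SimplexCategory.mk j))) :
    SimplexCategory.toTop.obj (SimplexCategory.mk j) ⟶ TopCat.of X' := σ.down

lemma sk_injective {X' Y' : Type} [TopologicalSpace X'] [TopologicalSpace Y'] (f : C(X', Y'))
    (hf : Function.Injective f) (j : ℕ) :
    Function.Injective
      ((TopCat.toSSet.map (toTopHom f)).app (op (SimplexCategory.mk j))) := by
  intro σ τ hστ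
  have h : asHom σ ≫ toTopHom f = asHom τ ≫ toTopHom f := congrArg ULift.down hστ
  have h2 : asHom σ = asHom τ := by
    ext x
    exact hf (congrFun (congrArg
      (fun (u : SimplexCategory.toTop.obj (SimplexCategory.mk j) ⟶ TopCat.of Y') =>
        (u : _ → _)) h) x)
  exact ULift.ext _ _ h2

lemma inclUA_injective (U A : Set X) : Function.Injective (inclUA U A) :=
  fun x y h => Set.inclusion_injective (Set.diff_subset : U \ A ⊆ U) h

noncomputable def relSC (U A : Set X) (p : ℕ) (hp : p.Prime) :
    ShortComplex (ChainComplex AddCommGrpCat ℕ) :=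
  ShortComplex.mk (relMap (X := X) (iotaHom p) U A) (relMap (mulP p) U A) (by
    apply (cancel_epi (cokernel.π (singularChainsMap (ZMod p) (inclUA U A)))).1
    rw [comp_zero, ← Category.assoc, relMap_pi, Category.assoc, relMap_pi, ← Category.assoc]
    ext j v
    show (cokernel.π (singularChainsMap (ℚ ⧸ RpGroup p) (inclUA U A))).f j
        ((chainsNat (mulP p) ↥U).f j ((chainsNat (iotaHom p) ↥U).f j v)) = 0
    have h1 : (chainsNat (mulP p) ↥U).f j ((chainsNat (iotaHom p) ↥U).f j v)
        = Finsupp.mapRange.addMonoidHom (mulP p)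
          (Finsupp.mapRange.addMonoidHom (iotaHom p) v) := rfl
    rw [h1, mapRange_comp_zero (iotaHom p) (mulP p) (mulP_iota p hp) v]
    exact AddMonoidHom.map_zero _)

end SES

end Stmt14Aux
namespace Stmt14Aux

open Opposite

section SES2

variable {X : Type} [TopologicalSpace X]

lemma relSES (U A : Set X) (p : ℕ) (hp : p.Prime) : (relSC U A p hp).ShortExact := by
  apply HomologicalComplex.shortExact_of_degreewise_shortExact
  intro j
  have hsk : Function.Injective
      ((TopCat.toSSet.map (toTopHom (inclUA U A))).app (op (SimplexCategory.mk j))) :=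
    sk_injective (inclUA U A) (inclUA_injective U A) j
  obtain ⟨hinj, hsurj, hex⟩ :=
    cokerChase
      (f₁ := Finsupp.mapDomain.addMonoidHom (M := ZMod p)
        ((TopCat.toSSet.map (toTopHom (inclUA U A))).app (op (SimplexCategory.mk j))))
      (f₂ := Finsupp.mapDomain.addMonoidHom (M := ℚ ⧸ RpGroup p)
        ((TopCat.toSSet.map (toTopHom (inclUA U A))).app (op (SimplexCategory.mk j))))
      (f₃ := Finsupp.mapDomain.addMonoidHom (M := ℚ ⧸ RpGroup p)
        ((TopCat.toSSet.map (toTopHom (inclUA U A))).app (op (SimplexCategory.mk j))))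
      (a := Finsupp.mapRange.addMonoidHom (iotaHom p))
      (a' := Finsupp.mapRange.addMonoidHom (mulP p))
      (b := Finsupp.mapRange.addMonoidHom (iotaHom p))
      (b' := Finsupp.mapRange.addMonoidHom (mulP p))
      (π₁ := ((cokernel.π (singularChainsMap (ZMod p) (inclUA U A))).f j).hom)
      (π₂ := ((cokernel.π (singularChainsMap (ℚ ⧸ RpGroup p) (inclUA U A))).f j).hom)
      (π₃ := ((cokernel.π (singularChainsMap (ℚ ⧸ RpGroup p) (inclUA U A))).f j).hom)
      (q := ((relMap (iotaHom p) U A).f j).hom)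
      (q' := ((relMap (mulP p) U A).f j).hom)
      (hπ₁ := pik_surj (singularChainsMap (ZMod p) (inclUA U A)) j)
      (hπ₂ := pik_surj (singularChainsMap (ℚ ⧸ RpGroup p) (inclUA U A)) j)
      (hπ₃ := pik_surj (singularChainsMap (ℚ ⧸ RpGroup p) (inclUA U A)) j)
      (hker₁ := pik_ker (singularChainsMap (ZMod p) (inclUA U A)) j)
      (hker₂ := pik_ker (singularChainsMap (ℚ ⧸ RpGroup p) (inclUA U A)) j)
      (hker₃ := pik_ker (singularChainsMap (ℚ ⧸ RpGroup p) (inclUA U A)) j)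
      (hz₁ := pik_zero (singularChainsMap (ZMod p) (inclUA U A)) j)
      (hz₂ := pik_zero (singularChainsMap (ℚ ⧸ RpGroup p) (inclUA U A)) j)
      (hz₃ := pik_zero (singularChainsMap (ℚ ⧸ RpGroup p) (inclUA U A)) j)
      (sq₁ := relMap_pi_apply (iotaHom p) U A j)
      (sq₂ := relMap_pi_apply (mulP p) U A j)
      (sqa := fun u => (Finsupp.mapDomain_mapRange _ u (iotaHom p)
        (iotaHom p).map_zero (iotaHom p).map_add).symm)
      (sqb := fun u => (Finsupp.mapDomain_mapRange _ u (mulP p)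
        (mulP p).map_zero (mulP p).map_add).symm)
      (hbinj := mapRange_inj (iotaHom p) (iota_injective p hp))
      (hf₃inj := Finsupp.mapDomain_injective hsk)
      (ha'surj := mapRange_surj (mulP p) (mulP_surjective p hp.ne_zero))
      (hb'surj := mapRange_surj (mulP p) (mulP_surjective p hp.ne_zero))
      (hbb' := mapRange_comp_zero (iotaHom p) (mulP p) (mulP_iota p hp))
      (hexA := mapRange_exact (iotaHom p) (mulP p) (exact_mulP_iota p hp))
      (hexB := mapRange_exact (iotaHom p) (mulP p) (exact_mulP_iota p hp))
  exact { exact := (ShortComplex.ab_exact_iff _).2 (fun x hx => hex x hx),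
          mono_f := (AddCommGrpCat.mono_iff_injective _).2 hinj,
          epi_g := (AddCommGrpCat.epi_iff_surjective _).2 hsurj }

lemma subsingleton_of_isZero {G : AddCommGrpCat} (h : CategoryTheory.Limits.IsZero G) :
    Subsingleton G := by
  have h1 : (𝟙 G : G ⟶ G) = 0 := h.eq_of_src _ _
  refine ⟨fun a b => ?_⟩
  have ha : a = (𝟙 G : G ⟶ G) a := rfl
  have hb : b = (𝟙 G : G ⟶ G) b := rfl
  rw [ha, hb, h1]
  rfl

end SES2

end Stmt14Aux

/-- If `A` is a `ℚ_p`-homological `Z_{n+1}`-set (`ℚ_p = ℚ/R_p` the quasicyclic Prüfer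
`p`-group), then `A` is a `ℤ_p`-homological `Z_n`-set. -/
theorem stmt14 {X : Type} [TopologicalSpace X] (A : Set X) (p : ℕ) (hp : p.Prime) (n : ℕ)
    (h : IsHomologicalZSet (ℚ ⧸ RpGroup p) (n + 1) A) :
    IsHomologicalZSet (ZMod p) n A := by
  obtain ⟨hcl, hh⟩ := h
  refine ⟨hcl, fun U hU k hk => ?_⟩
  have hS := Stmt14Aux.relSES U A p hp
  have e1 := hS.homology_exact₁ (k + 1) k rfl
  have z1 : CategoryTheory.Limits.IsZero ((Stmt14Aux.relSC U A p hp).X₃.homology (k + 1)) := by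
    haveI : Subsingleton ((Stmt14Aux.relSC U A p hp).X₃.homology (k + 1)) :=
      hh U hU (k + 1) (by omega)
    exact AddCommGrpCat.isZero_of_subsingleton _
  have z2 : CategoryTheory.Limits.IsZero ((Stmt14Aux.relSC U A p hp).X₂.homology k) := by
    haveI : Subsingleton ((Stmt14Aux.relSC U A p hp).X₂.homology k) := hh U hU k (by omega)
    exact AddCommGrpCat.isZero_of_subsingleton _
  have z3 := e1.isZero_of_both_zeros (z1.eq_of_src _ _) (z2.eq_of_tgt _ _)
  exact Stmt14Aux.subsingleton_of_isZero z3
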